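/- Let K be an infinite field and n ≥ 1. Consider the natural representation (Kⁿ, UTₙ(K)) of the group UTₙ(K) of upper unitriangular n×n matrices over K acting on the module Kⁿ by matrix multiplication. Then an element u ∈ KF is an identity of the representation (Kⁿ, UTₙ(K)) if and only if u belongs to (Δ_F)ⁿ, the n-th power of the augmentation ideal of KF. (The variety 𝔖ⁿ, defined by the identity x∘(y₁−1)⋯(yₙ−1) ≡ 0, is generated by (Kⁿ, UTₙ(K)).) -/

import Mathlib

open MonoidAlgebra

def prodT {K : Type} [Field K] (t : ℕ × ℕ → K) : List ℕ → ℕ → K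
  | [], _ => 1
  | i :: w, p => t (i, p) * prodT t w (p + 1)

@[simp] lemma prodT_nil {K : Type} [Field K] (t : ℕ × ℕ → K) (p : ℕ) : prodT t [] p = 1 := rfl

@[simp] lemma prodT_cons {K : Type} [Field K] (t : ℕ × ℕ → K) (i : ℕ) (w : List ℕ) (p : ℕ) :
    prodT t (i :: w) p = t (i, p) * prodT t w (p + 1) := rfl

section
variable (K : Type) [Field K] (n : ℕ)

def Tsub (k : ℕ) : Submodule K (Matrix (Fin n) (Fin n) K) where
  carrier := {M | ∀ i j : Fin n, (j:ℕ) < (i:ℕ) + k → M i j = 0}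
  add_mem' := by intro a b ha hb i j h; simp [Matrix.add_apply, ha i j h, hb i j h]
  zero_mem' := by intro i j h; rfl
  smul_mem' := by intro c M hM i j h; simp [Matrix.smul_apply, hM i j h]

lemma Tsub_mul {a b : ℕ} {M N : Matrix (Fin n) (Fin n) K}
    (hM : M ∈ Tsub K n a) (hN : N ∈ Tsub K n b) : M * N ∈ Tsub K n (a + b) := by
  intro i j h
  rw [Matrix.mul_apply]
  apply Finset.sum_eq_zero
  intro k _
  rcases lt_or_ge (k:ℕ) ((i:ℕ) + a) with hk | hk
  · rw [hM i k hk, zero_mul]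
  · rw [hN k j (by omega), mul_zero]


lemma Tsub_top {M : Matrix (Fin n) (Fin n) K} (hM : M ∈ Tsub K n n) : M = 0 := by
  ext i j
  exact hM i j (by omega)

lemma Tsub_antitone {a b : ℕ} (h : a ≤ b) : Tsub K n b ≤ Tsub K n a := by
  intro M hM i j hij
  exact hM i j (by omega)

lemma Tsub_pow {N : Matrix (Fin n) (Fin n) K} (hN : N ∈ Tsub K n 1) (k : ℕ) (hk : 1 ≤ k) :
    N ^ k ∈ Tsub K n k := by
  induction k with
  | zero => omega
  | succ m ih =>
    rcases Nat.eq_or_lt_of_le hk with h1 | h1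
    · rw [← h1, pow_one]; exact hN
    · rw [pow_succ]
      exact Tsub_mul K n (ih (by omega)) hN

lemma Npow_eq_zero {N : Matrix (Fin n) (Fin n) K} (hN : N ∈ Tsub K n 1) : N ^ n = 0 := by
  rcases Nat.eq_zero_or_pos n with h | h
  · subst h; ext i j; exact absurd i.2 (by omega)
  · exact Tsub_top K n (Tsub_pow K n hN n h)

noncomputable def epsA : MonoidAlgebra K (FreeGroup ℕ) →ₐ[K] K :=
  MonoidAlgebra.lift K K (FreeGroup ℕ) (1 : FreeGroup ℕ →* K)

noncomputable def Daug : Submodule K (MonoidAlgebra K (FreeGroup ℕ)) :=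
  (RingHom.ker ((MonoidAlgebra.lift K K (FreeGroup ℕ)) (1 : FreeGroup ℕ →* K))).restrictScalars K

lemma mem_Daug_iff {u : MonoidAlgebra K (FreeGroup ℕ)} : u ∈ Daug K ↔ epsA K u = 0 := Iff.rfl

lemma epsA_apply (u : MonoidAlgebra K (FreeGroup ℕ)) : epsA K u = u.coeff.sum fun _ b => b := by
  rw [epsA, MonoidAlgebra.lift_apply]; simp

noncomputable abbrev ofA : FreeGroup ℕ →* MonoidAlgebra K (FreeGroup ℕ) :=
  MonoidAlgebra.of K (FreeGroup ℕ)

noncomputable def piw (w : List ℕ) : MonoidAlgebra K (FreeGroup ℕ) :=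
  (w.map (fun i => ofA K (FreeGroup.of i) - 1)).prod

@[simp] lemma piw_nil : piw K [] = 1 := rfl

lemma piw_append (w₁ w₂ : List ℕ) : piw K (w₁ ++ w₂) = piw K w₁ * piw K w₂ := by
  simp [piw, List.prod_append]

lemma piw_singleton (i : ℕ) : piw K [i] = ofA K (FreeGroup.of i) - 1 := by
  simp [piw]

lemma ofA_sub_one_mem (g : FreeGroup ℕ) : ofA K g - 1 ∈ Daug K := by
  rw [mem_Daug_iff, map_sub, map_one, epsA, MonoidAlgebra.lift_of]
  simp

lemma piw_mem_pow (w : List ℕ) : piw K w ∈ (Daug K ^ w.length : Submodule K _) := by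
  induction w with
  | nil =>
    simp only [piw_nil, List.length_nil, pow_zero]
    exact Submodule.one_le.mp le_rfl
  | cons i w ih =>
    have : piw K (i :: w) = piw K [i] * piw K w := by
      rw [← piw_append]; rfl
    rw [this, List.length_cons, pow_succ']
    exact Submodule.mul_mem_mul (by rw [piw_singleton]; exact ofA_sub_one_mem K _) ih

lemma Daug_mul_mem {u : MonoidAlgebra K (FreeGroup ℕ)} (hu : u ∈ Daug K)
    (r : MonoidAlgebra K (FreeGroup ℕ)) : u * r ∈ Daug K := by
  rw [mem_Daug_iff, map_mul, (mem_Daug_iff K).mp hu, zero_mul]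

lemma Daug_mul_mem' {u : MonoidAlgebra K (FreeGroup ℕ)} (hu : u ∈ Daug K)
    (r : MonoidAlgebra K (FreeGroup ℕ)) : r * u ∈ Daug K := by
  rw [mem_Daug_iff, map_mul, (mem_Daug_iff K).mp hu, mul_zero]

lemma pow_mul_right_mem {k : ℕ} (hk : 1 ≤ k) {u : MonoidAlgebra K (FreeGroup ℕ)}
    (hu : u ∈ (Daug K ^ k : Submodule K _)) (r : MonoidAlgebra K (FreeGroup ℕ)) :
    u * r ∈ (Daug K ^ k : Submodule K _) := by
  induction k with
  | zero => omega
  | succ m ih =>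
    rcases Nat.eq_or_lt_of_le hk with h1 | h1
    · rw [← h1, pow_one] at hu ⊢
      exact Daug_mul_mem K hu r
    · rw [pow_succ] at hu ⊢
      refine Submodule.mul_induction_on hu (fun x hx y hy => ?_) (fun x y hx hy => ?_)
      · rw [mul_assoc]
        exact Submodule.mul_mem_mul hx (Daug_mul_mem K hy r)
      · rw [add_mul]
        exact add_mem hx hy

lemma pow_mul_left_mem {k : ℕ} (hk : 1 ≤ k) {u : MonoidAlgebra K (FreeGroup ℕ)}
    (hu : u ∈ (Daug K ^ k : Submodule K _)) (r : MonoidAlgebra K (FreeGroup ℕ)) :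
    r * u ∈ (Daug K ^ k : Submodule K _) := by
  induction k with
  | zero => omega
  | succ m ih =>
    rcases Nat.eq_or_lt_of_le hk with h1 | h1
    · rw [← h1, pow_one] at hu ⊢
      exact Daug_mul_mem' K hu r
    · rw [pow_succ'] at hu ⊢
      refine Submodule.mul_induction_on hu (fun x hx y hy => ?_) (fun x y hx hy => ?_)
      · rw [← mul_assoc]
        exact Submodule.mul_mem_mul (Daug_mul_mem' K hx r) hy
      · rw [mul_add]
        exact add_mem hx hy

lemma pow_le_pow_Daug {k m : ℕ} (hk : 1 ≤ k) (hkm : k ≤ m) :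
    (Daug K ^ m : Submodule K _) ≤ (Daug K ^ k : Submodule K _) := by
  induction m with
  | zero => omega
  | succ l ih =>
    rcases Nat.eq_or_lt_of_le hkm with h1 | h1
    · rw [h1]
    · have hl : k ≤ l := by omega
      refine le_trans ?_ (ih hl)
      rw [pow_succ]
      intro u hu
      refine Submodule.mul_induction_on hu (fun x hx y hy => ?_) (fun x y hx hy => add_mem hx hy)
      exact pow_mul_right_mem K (le_trans hk hl) hx y




noncomputable def Jmod (d : ℕ) : Submodule K (MonoidAlgebra K (FreeGroup ℕ)) :=
  Submodule.span K (Set.range fun w : {w : List ℕ // d ≤ w.length ∧ w.length < n} => piw K w.1)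
    ⊔ (Daug K ^ n : Submodule K _)

lemma Jmod_antitone {d e : ℕ} (h : d ≤ e) : Jmod K n e ≤ Jmod K n d := by
  apply sup_le_sup_right
  apply Submodule.span_mono
  rintro x ⟨⟨w, hw1, hw2⟩, rfl⟩
  exact ⟨⟨w, le_trans h hw1, hw2⟩, rfl⟩

lemma pow_le_Jmod (d : ℕ) : (Daug K ^ n : Submodule K _) ≤ Jmod K n d := le_sup_right

lemma piw_mem_Jmod {d : ℕ} {w : List ℕ} (h1 : d ≤ w.length) (h2 : w.length < n) :
    piw K w ∈ Jmod K n d :=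
  Submodule.mem_sup_left (Submodule.subset_span ⟨⟨w, h1, h2⟩, rfl⟩)

lemma ofA_mul_inv (g : FreeGroup ℕ) : ofA K g * ofA K g⁻¹ = 1 := by
  rw [← map_mul, mul_inv_cancel, map_one]

lemma inv_decomp (g : FreeGroup ℕ) :
    ofA K g⁻¹ - 1 = -(ofA K g - 1) - (ofA K g - 1) * (ofA K g⁻¹ - 1) := by
  have h2 : (ofA K g - 1) * (ofA K g⁻¹ - 1)
      = ofA K g * ofA K g⁻¹ - ofA K g - ofA K g⁻¹ + 1 := by noncomm_ring
  rw [h2, ofA_mul_inv]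
  abel

lemma mul_decomp (g h : FreeGroup ℕ) :
    ofA K (g * h) - 1 = (ofA K g - 1) + (ofA K h - 1) + (ofA K g - 1) * (ofA K h - 1) := by
  have h2 : (ofA K g - 1) * (ofA K h - 1)
      = ofA K g * ofA K h - ofA K g - ofA K h + 1 := by noncomm_ring
  rw [h2, ← map_mul]
  abel

/-- The key reduction lemma. -/
lemma key_lemma (hn : 1 ≤ n) :
    ∀ k d, n ≤ d + k → ∀ (h : FreeGroup ℕ) (w : List ℕ), w.length = d →
      piw K w * (ofA K h - 1) ∈ Jmod K n (d + 1) := by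
  intro k
  induction k with
  | zero =>
    intro d hd h w hw
    apply pow_le_Jmod
    refine pow_mul_right_mem K hn ?_ _
    exact pow_le_pow_Daug K hn (by omega) (hw ▸ piw_mem_pow K w)
  | succ m ih =>
    intro d hd h w hw
    rcases Nat.lt_or_ge d (n - m) with hdm | hdm
    swap
    · exact ih d (by omega) h w hw
    have stab : ∀ x ∈ Jmod K n (d + 1), ∀ h' : FreeGroup ℕ,
        x * (ofA K h' - 1) ∈ Jmod K n (d + 1) := by
      intro x hx h'
      rw [Jmod] at hx
      rcases Submodule.mem_sup.mp hx with ⟨y, hy, z, hz, rfl⟩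
      rw [add_mul]
      refine add_mem ?_ (pow_le_Jmod K n _ (pow_mul_right_mem K hn hz _))
      refine Submodule.span_induction
        (p := fun a _ => a * (ofA K h' - 1) ∈ Jmod K n (d + 1)) ?_ ?_ ?_ ?_ hy
      · rintro p ⟨⟨w', hw1, hw2⟩, rfl⟩
        refine Jmod_antitone K n (by omega : d + 1 ≤ w'.length + 1)
          (ih w'.length (by omega) h' w' rfl)
      · simp only [zero_mul]; exact zero_mem _
      · intro a b _ _ ha hb; simp only [add_mul]; exact add_mem ha hb
      · intro c a _ ha; simp only [smul_mul_assoc]; exact Submodule.smul_mem _ c ha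
    have hsing : ∀ i : ℕ, piw K w * (ofA K (FreeGroup.of i) - 1) ∈ Jmod K n (d + 1) := by
      intro i
      have heq : piw K w * (ofA K (FreeGroup.of i) - 1) = piw K (w ++ [i]) := by
        rw [piw_append, piw_singleton]
      rw [heq]
      rcases Nat.lt_or_ge (w.length + 1) n with hlt | hge
      · exact piw_mem_Jmod K n (by simp; omega) (by simp; omega)
      · apply pow_le_Jmod
        have hmem := piw_mem_pow K (w ++ [i])
        have hlen : (w ++ [i]).length = w.length + 1 := by simp
        rw [hlen] at hmem
        exact pow_le_pow_Daug K hn (by omega) hmem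
    induction h using FreeGroup.induction_on with
    | C1 =>
      simp only [map_one, sub_self, mul_zero]
      exact zero_mem _
    | of i => exact hsing i
    | inv_of i _ =>
      have hpure : (pure i : FreeGroup ℕ) = FreeGroup.of i := rfl
      rw [inv_decomp, mul_sub, mul_neg, ← mul_assoc]
      exact sub_mem (neg_mem (hsing i)) (stab _ (hsing i) _)
    | mul h₁ h₂ ih₁ ih₂ =>
      rw [mul_decomp, mul_add, mul_add, ← mul_assoc]
      exact add_mem (add_mem ih₁ ih₂) (stab _ ih₁ h₂)


lemma mem_Jmod_zero (hn : 1 ≤ n) (u : MonoidAlgebra K (FreeGroup ℕ)) : u ∈ Jmod K n 0 := by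
  induction u using MonoidAlgebra.induction_on with
  | of g =>
    have : (MonoidAlgebra.of K (FreeGroup ℕ)) g = piw K [] + piw K [] * (ofA K g - 1) := by
      simp
    rw [this]
    refine add_mem (piw_mem_Jmod K n le_rfl (by simpa using Nat.one_le_iff_ne_zero.mp hn |>.bot_lt)) ?_
    exact Jmod_antitone K n (by omega) (key_lemma K n hn n 0 (by omega) g [] rfl)
  | add f g hf hg => exact add_mem hf hg
  | smul r f hf => exact Submodule.smul_mem _ r hf

variable (β : FreeGroup ℕ →* (Matrix (Fin n) (Fin n) K)ˣ)

noncomputable abbrev Phi : MonoidAlgebra K (FreeGroup ℕ) →ₐ[K] Matrix (Fin n) (Fin n) K :=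
  MonoidAlgebra.lift K (Matrix (Fin n) (Fin n) K) (FreeGroup ℕ)
    ((Units.coeHom (Matrix (Fin n) (Fin n) K)).comp β)

lemma Phi_apply_entry (u : MonoidAlgebra K (FreeGroup ℕ)) (i j : Fin n) :
    Phi K n β u i j
      = u.coeff.sum fun g b => b * ((β g : (Matrix (Fin n) (Fin n) K)ˣ) : Matrix (Fin n) (Fin n) K) i j := by
  rw [MonoidAlgebra.lift_apply, Finsupp.sum, Finsupp.sum, Matrix.sum_apply]
  simp [Matrix.smul_apply, smul_eq_mul]

variable (hβ : ∀ w : FreeGroup ℕ,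
    (∀ i j : Fin n, j < i → ((β w : (Matrix (Fin n) (Fin n) K)ˣ) : Matrix (Fin n) (Fin n) K) i j = 0) ∧
    (∀ i : Fin n, ((β w : (Matrix (Fin n) (Fin n) K)ˣ) : Matrix (Fin n) (Fin n) K) i i = 1))

include hβ in
lemma Phi_mem_Tsub_one {u : MonoidAlgebra K (FreeGroup ℕ)} (hu : u ∈ Daug K) :
    Phi K n β u ∈ Tsub K n 1 := by
  intro i j hij
  rw [Phi_apply_entry]
  rcases Nat.lt_or_ge (j:ℕ) (i:ℕ) with h | h
  · apply Finset.sum_eq_zero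
    intro g _
    simp only [(hβ g).1 i j (by exact_mod_cast h), mul_zero]
  · have hji : j = i := by omega
    subst hji
    have : (u.coeff.sum fun g b => b * ((β g : (Matrix (Fin n) (Fin n) K)ˣ) : Matrix (Fin n) (Fin n) K) j j)
        = u.coeff.sum fun _ b => b := by
      apply Finsupp.sum_congr
      intro g _
      simp only [(hβ g).2 j, mul_one]
    rw [this, ← epsA_apply]
    exact (mem_Daug_iff K).mp hu

include hβ in
lemma Phi_pow_mem (k : ℕ) (hk : 1 ≤ k) :
    ∀ u ∈ (Daug K ^ k : Submodule K (MonoidAlgebra K (FreeGroup ℕ))), Phi K n β u ∈ Tsub K n k := by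
  induction k with
  | zero => omega
  | succ m ih =>
    rcases Nat.eq_or_lt_of_le hk with h1 | h1
    · intro u hu
      rw [← h1] at hu ⊢
      rw [pow_one] at hu
      exact Phi_mem_Tsub_one K n β hβ hu
    · have hm : 1 ≤ m := by omega
      intro u hu
      rw [pow_succ] at hu
      refine Submodule.mul_induction_on hu ?_ ?_
      · intro x hx y hy
        rw [map_mul]
        exact Tsub_mul K n (ih hm x hx) (Phi_mem_Tsub_one K n β hβ hy)
      · intro x y hx hy
        rw [map_add]
        exact add_mem hx hy

include hβ in
lemma Phi_pow_zero (hn : 1 ≤ n) {u : MonoidAlgebra K (FreeGroup ℕ)}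
    (hu : u ∈ (Daug K ^ n : Submodule K (MonoidAlgebra K (FreeGroup ℕ)))) :
    Phi K n β u = 0 := by
  ext i j
  exact Phi_pow_mem K n β hβ n hn u hu i j (by omega)


def unitri (M : Matrix (Fin n) (Fin n) K) : Prop := M - 1 ∈ Tsub K n 1

lemma unitri_iff (M : Matrix (Fin n) (Fin n) K) :
    unitri K n M ↔ (∀ i j : Fin n, j < i → M i j = 0) ∧ (∀ i : Fin n, M i i = 1) := by
  constructor
  · intro h
    constructor
    · intro i j hij
      have := h i j (by omega)
      simpa [Matrix.one_apply, Fin.ne_of_lt hij, (Fin.ne_of_lt hij).symm] using this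
    · intro i
      have := h i i (by omega)
      simpa [Matrix.one_apply, sub_eq_zero] using this
  · intro ⟨h1, h2⟩ i j hij
    rcases Nat.lt_or_ge (j : ℕ) (i : ℕ) with h | h
    · have hji : j < i := h
      simp [Matrix.sub_apply, Matrix.one_apply, h1 i j hji, Fin.ne_of_lt hji,
        (Fin.ne_of_lt hji).symm]
    · have hji : j = i := by omega
      subst hji
      simp [Matrix.sub_apply, Matrix.one_apply, h2 j]

lemma unitri_one : unitri K n 1 := by
  intro i j _; simp

lemma unitri_mul {A B : Matrix (Fin n) (Fin n) K} (hA : unitri K n A) (hB : unitri K n B) :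
    unitri K n (A * B) := by
  have : A * B - 1 = (A - 1) * (B - 1) + (A - 1) + (B - 1) := by noncomm_ring
  rw [unitri, this]
  exact add_mem (add_mem (Tsub_antitone K n (by omega) (Tsub_mul K n hA hB)) hA) hB

lemma units_inv_eq {A : (Matrix (Fin n) (Fin n) K)ˣ} (hA : unitri K n (A : Matrix (Fin n) (Fin n) K)) :
    ((A⁻¹ : (Matrix (Fin n) (Fin n) K)ˣ) : Matrix (Fin n) (Fin n) K)
      = ∑ i ∈ Finset.range n, (-((A : Matrix (Fin n) (Fin n) K) - 1)) ^ i := by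
  set N : Matrix (Fin n) (Fin n) K := (A : Matrix (Fin n) (Fin n) K) - 1 with hN
  set S : Matrix (Fin n) (Fin n) K := ∑ i ∈ Finset.range n, (-N) ^ i with hS
  have hNn : (-N) ^ n = 0 := by
    have := Npow_eq_zero K n (neg_mem hA : -N ∈ Tsub K n 1)
    exact this
  have hAval : (A : Matrix (Fin n) (Fin n) K) = N + 1 := by rw [hN]; abel
  have h1 : (A : Matrix (Fin n) (Fin n) K) * S = 1 := by
    have := mul_geom_sum (-N) n
    rw [hNn] at this
    have h2 : (-N - 1) * S = -1 := by rw [hS]; rw [this]; abel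
    have h3 : -((N + 1) * S) = -1 := by rw [← h2]; noncomm_ring
    have := neg_injective h3
    rw [hAval, this]
  have h2 : S * (A : Matrix (Fin n) (Fin n) K) = 1 := by
    have := geom_sum_mul (-N) n
    rw [hNn] at this
    have h2 : S * (-N - 1) = -1 := by rw [hS]; rw [this]; abel
    have h3 : -(S * (N + 1)) = -1 := by rw [← h2]; noncomm_ring
    have := neg_injective h3
    rw [hAval, this]
  calc ((A⁻¹ : (Matrix (Fin n) (Fin n) K)ˣ) : Matrix (Fin n) (Fin n) K)
      = ((A⁻¹ : (Matrix (Fin n) (Fin n) K)ˣ) : Matrix (Fin n) (Fin n) K)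
          * ((A : Matrix (Fin n) (Fin n) K) * S) := by rw [h1, mul_one]
    _ = (((A⁻¹ * A : (Matrix (Fin n) (Fin n) K)ˣ)) : Matrix (Fin n) (Fin n) K) * S := by
          rw [Units.val_mul, mul_assoc]
    _ = S := by rw [inv_mul_cancel]; simp

lemma unitri_inv {A : (Matrix (Fin n) (Fin n) K)ˣ} (hA : unitri K n (A : Matrix (Fin n) (Fin n) K)) :
    unitri K n ((A⁻¹ : (Matrix (Fin n) (Fin n) K)ˣ) : Matrix (Fin n) (Fin n) K) := by
  rcases Nat.eq_zero_or_pos n with h0 | hpos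
  · subst h0
    intro i j _
    exact absurd i.2 (by omega)
  · obtain ⟨k, rfl⟩ : ∃ k, n = k + 1 := ⟨n - 1, by omega⟩
    rw [unitri, units_inv_eq K _ hA]
    rw [Finset.sum_range_succ']
    simp only [pow_zero]
    have : (∑ i ∈ Finset.range k, (-((A : Matrix (Fin (k+1)) (Fin (k+1)) K) - 1)) ^ (i + 1)) + 1 - 1
        = ∑ i ∈ Finset.range k, (-((A : Matrix (Fin (k+1)) (Fin (k+1)) K) - 1)) ^ (i + 1) := by abel
    rw [this]
    refine Submodule.sum_mem _ fun i _ => ?_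
    exact Tsub_antitone K _ (by omega) (Tsub_pow K _ (neg_mem hA) (i+1) (by omega))

lemma unitri_all (β : FreeGroup ℕ →* (Matrix (Fin n) (Fin n) K)ˣ)
    (hgen : ∀ i : ℕ, unitri K n ((β (FreeGroup.of i) : (Matrix (Fin n) (Fin n) K)ˣ) : Matrix (Fin n) (Fin n) K)) :
    ∀ w : FreeGroup ℕ, unitri K n ((β w : (Matrix (Fin n) (Fin n) K)ˣ) : Matrix (Fin n) (Fin n) K) := by
  intro w
  induction w using FreeGroup.induction_on with
  | C1 => rw [map_one]; exact unitri_one K n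
  | of i => exact hgen i
  | inv_of i _ =>
    rw [map_inv]
    exact unitri_inv K n (hgen i)
  | mul x y hx hy =>
    rw [map_mul, Units.val_mul]
    exact unitri_mul K n hx hy

def Nmat (t : ℕ × ℕ → K) (i : ℕ) : Matrix (Fin n) (Fin n) K :=
  Matrix.of fun p q => if (q : ℕ) = (p : ℕ) + 1 then t (i, (p : ℕ)) else 0

lemma Nmat_mem (t : ℕ × ℕ → K) (i : ℕ) : Nmat K n t i ∈ Tsub K n 1 := by
  intro p q h
  simp only [Nmat, Matrix.of_apply]
  rw [if_neg (by omega)]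

noncomputable def Uunit (t : ℕ × ℕ → K) (i : ℕ) : (Matrix (Fin n) (Fin n) K)ˣ :=
  (IsNilpotent.isUnit_one_add ⟨n, Npow_eq_zero K n (Nmat_mem K n t i)⟩).unit

lemma Uunit_val (t : ℕ × ℕ → K) (i : ℕ) :
    ((Uunit K n t i : (Matrix (Fin n) (Fin n) K)ˣ) : Matrix (Fin n) (Fin n) K)
      = 1 + Nmat K n t i := IsUnit.unit_spec _

noncomputable def betaT (t : ℕ × ℕ → K) : FreeGroup ℕ →* (Matrix (Fin n) (Fin n) K)ˣ :=
  FreeGroup.lift (Uunit K n t)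

lemma betaT_of (t : ℕ × ℕ → K) (i : ℕ) :
    betaT K n t (FreeGroup.of i) = Uunit K n t i := FreeGroup.lift_apply_of

lemma betaT_unitri (t : ℕ × ℕ → K) :
    ∀ w : FreeGroup ℕ, unitri K n ((betaT K n t w : (Matrix (Fin n) (Fin n) K)ˣ) : Matrix (Fin n) (Fin n) K) := by
  apply unitri_all
  intro i
  rw [betaT_of, Uunit_val]
  have : (1 : Matrix (Fin n) (Fin n) K) + Nmat K n t i - 1 = Nmat K n t i := by abel
  rw [unitri, this]
  exact Nmat_mem K n t i

lemma Phi_ofA (β : FreeGroup ℕ →* (Matrix (Fin n) (Fin n) K)ˣ) (g : FreeGroup ℕ) :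
    Phi K n β (ofA K g) = ((β g : (Matrix (Fin n) (Fin n) K)ˣ) : Matrix (Fin n) (Fin n) K) := by
  rw [MonoidAlgebra.lift_of]
  rfl

lemma Phi_piw (t : ℕ × ℕ → K) (w : List ℕ) :
    Phi K n (betaT K n t) (piw K w) = (w.map (Nmat K n t)).prod := by
  rw [piw, map_list_prod, List.map_map]
  have hfun : (⇑(Phi K n (betaT K n t)) ∘ fun i => ofA K (FreeGroup.of i) - 1) = Nmat K n t := by
    funext i
    show Phi K n (betaT K n t) (ofA K (FreeGroup.of i) - 1) = Nmat K n t i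
    rw [map_sub, map_one, Phi_ofA, betaT_of, Uunit_val]
    abel
  rw [hfun]

lemma Nprod_entry (t : ℕ × ℕ → K) (w : List ℕ) : ∀ p q : Fin n,
    ((w.map (Nmat K n t)).prod) p q
      = if (q : ℕ) = (p : ℕ) + w.length then prodT t w (p : ℕ) else 0 := by
  induction w with
  | nil =>
    intro p q
    simp only [List.map_nil, List.prod_nil, List.length_nil, Nat.add_zero, prodT_nil]
    rw [Matrix.one_apply]
    by_cases h : p = q
    · subst h; rw [if_pos rfl, if_pos rfl]
    · rw [if_neg h, if_neg (by simp [Fin.ext_iff] at h ⊢; omega)]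
  | cons i w ih =>
    intro p q
    rw [List.map_cons, List.prod_cons, Matrix.mul_apply]
    rcases Nat.lt_or_ge ((p : ℕ) + 1) n with hp | hp
    · rw [Finset.sum_eq_single (⟨(p : ℕ) + 1, hp⟩ : Fin n)]
      · have h1 : Nmat K n t i p ⟨(p : ℕ) + 1, hp⟩ = t (i, (p : ℕ)) := by
          simp [Nmat]
        rw [h1, ih ⟨(p : ℕ) + 1, hp⟩ q]
        simp only [List.length_cons, prodT_cons]
        by_cases hq : (q : ℕ) = (p : ℕ) + (w.length + 1)
        · rw [if_pos (by omega : (q:ℕ) = ((p:ℕ)+1) + w.length), if_pos hq]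
        · rw [if_neg (by omega : ¬ (q:ℕ) = ((p:ℕ)+1) + w.length), if_neg hq, mul_zero]
      · intro b _ hb
        have : ¬ ((b : ℕ) = (p : ℕ) + 1) := by
          intro hcontra
          exact hb (Fin.ext hcontra)
        rw [show Nmat K n t i p b = 0 from by simp [Nmat, this], zero_mul]
      · intro h
        exact absurd (Finset.mem_univ _) h
    · rw [Finset.sum_eq_zero, if_neg (by simp only [List.length_cons]; omega)]
      intro b _
      have : ¬ ((b : ℕ) = (p : ℕ) + 1) := by omega
      rw [show Nmat K n t i p b = 0 from by simp [Nmat, this], zero_mul]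

end

noncomputable def mon (K : Type) [Field K] : List ℕ → ℕ → MvPolynomial (ℕ × ℕ) K
  | [], _ => 1
  | i :: w, p => (MvPolynomial.X (i, p)) * mon K w (p + 1)

noncomputable def expw : List ℕ → ℕ → ((ℕ × ℕ) →₀ ℕ)
  | [], _ => 0
  | i :: w, p => Finsupp.single (i, p) 1 + expw w (p + 1)

@[simp] lemma expw_nil (p : ℕ) : expw [] p = 0 := by rw [expw]

@[simp] lemma expw_cons (i : ℕ) (w : List ℕ) (p : ℕ) :
    expw (i :: w) p = Finsupp.single (i, p) 1 + expw w (p + 1) := by rw [expw]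

section
variable (K : Type) [Field K]

lemma eval_mon (t : ℕ × ℕ → K) : ∀ (w : List ℕ) (p : ℕ),
    MvPolynomial.eval t (mon K w p) = prodT t w p := by
  intro w
  induction w with
  | nil => intro p; simp [mon]
  | cons i w ih => intro p; simp [mon, ih]

lemma mon_eq_monomial : ∀ (w : List ℕ) (p : ℕ),
    mon K w p = MvPolynomial.monomial (expw w p) (1 : K) := by
  intro w
  induction w with
  | nil =>
    intro p
    simp [mon, expw]
  | cons i w ih =>
    intro p
    rw [show mon K (i :: w) p = MvPolynomial.X (i, p) * mon K w (p+1) from rfl, ih, expw_cons]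
    rw [show (MvPolynomial.X (i, p) : MvPolynomial (ℕ × ℕ) K)
          = MvPolynomial.monomial (Finsupp.single (i, p) 1) 1 from by
        rw [← MvPolynomial.X_pow_eq_monomial, pow_one]]
    rw [MvPolynomial.monomial_mul, one_mul]

lemma expw_support : ∀ (w : List ℕ) (p : ℕ) (x : ℕ × ℕ), x ∈ (expw w p).support → p ≤ x.2 := by
  intro w
  induction w with
  | nil => intro p x hx; simp [expw] at hx
  | cons i w ih =>
    intro p x hx
    rw [expw_cons] at hx
    have := Finsupp.support_add hx
    rw [Finset.mem_union] at this
    rcases this with h | h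
    · have hx2 := Finsupp.support_single_subset h
      rw [Finset.mem_singleton] at hx2
      subst hx2
      simp
    · have := ih (p+1) x h
      omega

lemma expw_inj : ∀ (w w' : List ℕ) (p : ℕ), w.length = w'.length →
    expw w p = expw w' p → w = w' := by
  intro w
  induction w with
  | nil =>
    intro w' p hlen _
    cases w' with
    | nil => rfl
    | cons i w' => simp at hlen
  | cons i w ih =>
    intro w' p hlen heq
    cases w' with
    | nil => simp at hlen
    | cons i' w'' =>
      rw [expw_cons, expw_cons] at heq
      have hval : ((Finsupp.single (i, p) 1 + expw w (p+1) : (ℕ × ℕ) →₀ ℕ)) (i, p)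
          = ((Finsupp.single (i', p) 1 + expw w'' (p+1) : (ℕ × ℕ) →₀ ℕ)) (i, p) := by rw [heq]
      simp only [Finsupp.add_apply] at hval
      have h1 : expw w (p+1) (i, p) = 0 := by
        by_contra hne
        have := expw_support w (p+1) (i, p) (Finsupp.mem_support_iff.mpr hne)
        simp at this
      have h2 : expw w'' (p+1) (i, p) = 0 := by
        by_contra hne
        have := expw_support w'' (p+1) (i, p) (Finsupp.mem_support_iff.mpr hne)
        simp at this
      rw [h1, h2, Finsupp.single_apply, Finsupp.single_apply, if_pos rfl] at hval
      have hii : i' = i := by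
        by_contra hne
        rw [if_neg (by simp [hne])] at hval
        simp at hval
      subst hii
      have heq2 : expw w (p+1) = expw w'' (p+1) := by
        have := add_left_cancel heq
        exact this
      have := ih w'' (p+1) (by simpa using hlen) heq2
      rw [this]
end

/-- over an infinite field `K`, an element `u ∈ KF` is an identity of the
natural representation `(Kⁿ, UTₙ(K))` of the unitriangular group iff `u` lies in the `n`-th
power of the augmentation ideal `Δ_F` of `KF`; i.e. `𝔖ⁿ` is generated by `(Kⁿ, UTₙ(K))`. -/
theorem Sn_generated_by_unitriangular_representation
    (K : Type) [Field K] [Infinite K] (n : ℕ) (hn : 1 ≤ n)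
    (u : MonoidAlgebra K (FreeGroup ℕ)) :
    (∀ β : FreeGroup ℕ →* (Matrix (Fin n) (Fin n) K)ˣ,
        (∀ w : FreeGroup ℕ,
            (∀ i j : Fin n, j < i → ((β w : (Matrix (Fin n) (Fin n) K)ˣ) : Matrix (Fin n) (Fin n) K) i j = 0) ∧
            (∀ i : Fin n, ((β w : (Matrix (Fin n) (Fin n) K)ˣ) : Matrix (Fin n) (Fin n) K) i i = 1)) →
        ∀ v : Fin n → K,
          Matrix.mulVec
            ((MonoidAlgebra.lift K (Matrix (Fin n) (Fin n) K) (FreeGroup ℕ)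
                ((Units.coeHom (Matrix (Fin n) (Fin n) K)).comp β)) u) v = 0) ↔
    u ∈ ((RingHom.ker ((MonoidAlgebra.lift K K (FreeGroup ℕ))
            (1 : FreeGroup ℕ →* K))).restrictScalars K : Submodule K (MonoidAlgebra K (FreeGroup ℕ))) ^ n := by
  constructor
  · intro H
    show u ∈ (Daug K ^ n : Submodule K (MonoidAlgebra K (FreeGroup ℕ)))
    have hu0 := mem_Jmod_zero K n hn u
    rw [Jmod] at hu0
    rcases Submodule.mem_sup.mp hu0 with ⟨L, hL, r, hr, huLr⟩
    rcases Finsupp.mem_span_range_iff_exists_finsupp.mp hL with ⟨c, hc⟩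
    have hβpair : ∀ t : ℕ × ℕ → K, ∀ w : FreeGroup ℕ,
        (∀ i j : Fin n, j < i →
          ((betaT K n t w : (Matrix (Fin n) (Fin n) K)ˣ) : Matrix (Fin n) (Fin n) K) i j = 0) ∧
        (∀ i : Fin n,
          ((betaT K n t w : (Matrix (Fin n) (Fin n) K)ˣ) : Matrix (Fin n) (Fin n) K) i i = 1) :=
      fun t w => (unitri_iff K n _).mp (betaT_unitri K n t w)
    have hPhiu : ∀ t : ℕ × ℕ → K, Phi K n (betaT K n t) u = 0 := by
      intro t
      ext i j
      have hv := H (betaT K n t) (hβpair t) (Pi.single j 1)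
      have h2 := congrFun hv i
      rw [Matrix.mulVec_single] at h2
      simpa using h2
    have hcw : ∀ w₀ : {w : List ℕ // 0 ≤ w.length ∧ w.length < n}, c w₀ = 0 := by
      intro w₀
      classical
      set d := w₀.1.length with hd
      have hdn : d < n := w₀.2.2
      set P : MvPolynomial (ℕ × ℕ) K :=
        c.sum (fun w a => if w.1.length = d then MvPolynomial.C a * mon K w.1 0 else 0) with hP
      set p0 : Fin n := ⟨0, by omega⟩ with hp0
      set q0 : Fin n := ⟨d, hdn⟩ with hq0
      have hentry : ∀ t : ℕ × ℕ → K, MvPolynomial.eval t P = Phi K n (betaT K n t) u p0 q0 := by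
        intro t
        have hPhiL : Phi K n (betaT K n t) L p0 q0 =
            c.sum fun w a => if w.1.length = d then a * prodT t w.1 0 else 0 := by
          rw [← hc, map_finsuppSum, Finsupp.sum, Finsupp.sum, Matrix.sum_apply]
          apply Finset.sum_congr rfl
          intro w _
          simp only [map_smul, Matrix.smul_apply, Phi_piw, Nprod_entry, smul_eq_mul]
          by_cases hw : w.1.length = d
          · rw [if_pos (by simp [hp0, hq0, hw] : (q0 : ℕ) = (p0 : ℕ) + w.1.length), if_pos hw]
          · rw [if_neg (by simp [hp0, hq0]; omega : ¬ (q0 : ℕ) = (p0 : ℕ) + w.1.length),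
              if_neg hw, mul_zero]
        have hPhir : Phi K n (betaT K n t) r = 0 := Phi_pow_zero K n _ (hβpair t) hn hr
        have huL : Phi K n (betaT K n t) u = Phi K n (betaT K n t) L := by
          rw [← huLr, map_add, hPhir, add_zero]
        rw [huL, hPhiL, hP, Finsupp.sum, Finsupp.sum, map_sum]
        apply Finset.sum_congr rfl
        intro w _
        by_cases hw : w.1.length = d
        · rw [if_pos hw, if_pos hw, map_mul, MvPolynomial.eval_C, eval_mon]
        · rw [if_neg hw, if_neg hw, map_zero]
      have hPzero : P = 0 := by
        apply MvPolynomial.funext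
        intro t
        rw [hentry t, hPhiu t, map_zero, Matrix.zero_apply]
      have hco : MvPolynomial.coeff (expw w₀.1 0) P = c w₀ := by
        rw [hP, Finsupp.sum, MvPolynomial.coeff_sum]
        have hterm : ∀ w ∈ c.support, MvPolynomial.coeff (expw w₀.1 0)
            (if w.1.length = d then MvPolynomial.C (c w) * mon K w.1 0 else 0)
            = if w = w₀ then c w else 0 := by
          intro w _
          by_cases hww : w = w₀
          · subst hww
            rw [if_pos rfl, if_pos rfl, mon_eq_monomial, MvPolynomial.C_mul_monomial, mul_one,
              MvPolynomial.coeff_monomial, if_pos rfl]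
          · rw [if_neg hww]
            by_cases hlen : w.1.length = d
            · rw [if_pos hlen, mon_eq_monomial, MvPolynomial.C_mul_monomial, mul_one,
                MvPolynomial.coeff_monomial, if_neg ?_]
              intro hcontra
              exact hww (Subtype.ext (expw_inj w.1 w₀.1 0 (by rw [hlen, hd]) hcontra))
            · rw [if_neg hlen, MvPolynomial.coeff_zero]
        rw [Finset.sum_congr rfl hterm]
        exact Finsupp.sum_ite_self_eq' c w₀
      rw [hPzero, MvPolynomial.coeff_zero] at hco
      exact hco.symm
    have hc0 : c = 0 := Finsupp.ext hcw
    rw [hc0, Finsupp.sum_zero_index] at hc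
    rw [← huLr, ← hc, zero_add]
    exact hr
  · intro hu β hβ v
    have h0 : Phi K n β u = 0 := Phi_pow_zero K n β hβ hn hu
    show Matrix.mulVec (Phi K n β u) v = 0
    rw [h0, Matrix.zero_mulVec]
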